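/- The linear map ⋀²ℂ⁷ → ⋀⁶ℂ⁷ given by w ↦ w∧ω is surjective; equivalently, its kernel { w ∈ ⋀²ℂ⁷ : w∧ω = 0 } has dimension 14. (Thus the adjoint variety G₂ of ω-isotropic 2-planes is cut out from the Grassmannian G(2,7) by seven hyperplanes and has linear span a ℙ¹³ inside ℙ(⋀²ℂ⁷).) -/

import Mathlib

open ExteriorAlgebra

noncomputable section

/-- The standard basis 1-vectors `eᵢ` of `⋀¹ℂ⁷` (indexed from 0, so `e 0 = e₁`, …, `e 6 = e₇`). -/
def e (i : Fin 7) : ExteriorAlgebra ℂ (Fin 7 → ℂ) := ι ℂ (Pi.single i 1)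

/-- The degenerate 4-form
`ω₀ = e₁∧e₂∧e₃∧e₇ + e₄∧e₅∧e₆∧e₇ + e₂∧e₃∧e₅∧e₆ + e₁∧e₃∧e₄∧e₆`. -/
def ω₀ : ExteriorAlgebra ℂ (Fin 7 → ℂ) :=
  e 0 * e 1 * e 2 * e 6 + e 3 * e 4 * e 5 * e 6 + e 1 * e 2 * e 4 * e 5 + e 0 * e 2 * e 3 * e 5

/-- The non-degenerate 4-form `ω = ω₀ + e₁∧e₂∧e₄∧e₅`. -/
def ω : ExteriorAlgebra ℂ (Fin 7 → ℂ) := ω₀ + e 0 * e 1 * e 3 * e 4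

abbrev bb (i : Fin 7) : Fin 7 → ℂ := Pi.single i 1

lemma h6 (a₁ a₂ a₃ a₄ a₅ a₆ : Fin 7) :
    e a₁ * e a₂ * (e a₃ * e a₄ * e a₅ * e a₆)
      = ιMulti ℂ 6 ![bb a₁, bb a₂, bb a₃, bb a₄, bb a₅, bb a₆] := by
  rw [ιMulti_apply]
  simp [List.ofFn_succ, e, mul_assoc]

def σ3 : Equiv.Perm (Fin 6) := Equiv.mk ![3,4,0,1,2,5] ![2,3,4,0,1,5] (by decide) (by decide)
def σ6 : Equiv.Perm (Fin 6) := Equiv.mk ![0,3,1,2,4,5] ![0,2,3,1,4,5] (by decide) (by decide)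

lemma key0 : e 1 * e 2 * ω = ιMulti ℂ 6 ![bb 1, bb 2, bb 3, bb 4, bb 5, bb 6] := by
  rw [ω, ω₀, mul_add, mul_add, mul_add, mul_add, h6, h6, h6, h6, h6]
  rw [show ιMulti ℂ 6 ![bb 1, bb 2, bb 0, bb 1, bb 2, bb 6] = 0 from AlternatingMap.map_eq_zero_of_eq _ _ (show ![bb 1, bb 2, bb 0, bb 1, bb 2, bb 6] 0 = ![bb 1, bb 2, bb 0, bb 1, bb 2, bb 6] 3 from rfl) (by decide)]
  rw [show ιMulti ℂ 6 ![bb 1, bb 2, bb 1, bb 2, bb 4, bb 5] = 0 from AlternatingMap.map_eq_zero_of_eq _ _ (show ![bb 1, bb 2, bb 1, bb 2, bb 4, bb 5] 0 = ![bb 1, bb 2, bb 1, bb 2, bb 4, bb 5] 2 from rfl) (by decide)]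
  rw [show ιMulti ℂ 6 ![bb 1, bb 2, bb 0, bb 2, bb 3, bb 5] = 0 from AlternatingMap.map_eq_zero_of_eq _ _ (show ![bb 1, bb 2, bb 0, bb 2, bb 3, bb 5] 1 = ![bb 1, bb 2, bb 0, bb 2, bb 3, bb 5] 3 from rfl) (by decide)]
  rw [show ιMulti ℂ 6 ![bb 1, bb 2, bb 0, bb 1, bb 3, bb 4] = 0 from AlternatingMap.map_eq_zero_of_eq _ _ (show ![bb 1, bb 2, bb 0, bb 1, bb 3, bb 4] 0 = ![bb 1, bb 2, bb 0, bb 1, bb 3, bb 4] 3 from rfl) (by decide)]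
  simp only [add_zero, zero_add]

lemma key1 : e 0 * e 2 * ω = ιMulti ℂ 6 ![bb 0, bb 2, bb 3, bb 4, bb 5, bb 6] := by
  rw [ω, ω₀, mul_add, mul_add, mul_add, mul_add, h6, h6, h6, h6, h6]
  rw [show ιMulti ℂ 6 ![bb 0, bb 2, bb 0, bb 1, bb 2, bb 6] = 0 from AlternatingMap.map_eq_zero_of_eq _ _ (show ![bb 0, bb 2, bb 0, bb 1, bb 2, bb 6] 0 = ![bb 0, bb 2, bb 0, bb 1, bb 2, bb 6] 2 from rfl) (by decide)]
  rw [show ιMulti ℂ 6 ![bb 0, bb 2, bb 1, bb 2, bb 4, bb 5] = 0 from AlternatingMap.map_eq_zero_of_eq _ _ (show ![bb 0, bb 2, bb 1, bb 2, bb 4, bb 5] 1 = ![bb 0, bb 2, bb 1, bb 2, bb 4, bb 5] 3 from rfl) (by decide)]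
  rw [show ιMulti ℂ 6 ![bb 0, bb 2, bb 0, bb 2, bb 3, bb 5] = 0 from AlternatingMap.map_eq_zero_of_eq _ _ (show ![bb 0, bb 2, bb 0, bb 2, bb 3, bb 5] 0 = ![bb 0, bb 2, bb 0, bb 2, bb 3, bb 5] 2 from rfl) (by decide)]
  rw [show ιMulti ℂ 6 ![bb 0, bb 2, bb 0, bb 1, bb 3, bb 4] = 0 from AlternatingMap.map_eq_zero_of_eq _ _ (show ![bb 0, bb 2, bb 0, bb 1, bb 3, bb 4] 0 = ![bb 0, bb 2, bb 0, bb 1, bb 3, bb 4] 2 from rfl) (by decide)]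
  simp only [add_zero, zero_add]

lemma key2 : e 0 * e 1 * ω = ιMulti ℂ 6 ![bb 0, bb 1, bb 3, bb 4, bb 5, bb 6] := by
  rw [ω, ω₀, mul_add, mul_add, mul_add, mul_add, h6, h6, h6, h6, h6]
  rw [show ιMulti ℂ 6 ![bb 0, bb 1, bb 0, bb 1, bb 2, bb 6] = 0 from AlternatingMap.map_eq_zero_of_eq _ _ (show ![bb 0, bb 1, bb 0, bb 1, bb 2, bb 6] 0 = ![bb 0, bb 1, bb 0, bb 1, bb 2, bb 6] 2 from rfl) (by decide)]
  rw [show ιMulti ℂ 6 ![bb 0, bb 1, bb 1, bb 2, bb 4, bb 5] = 0 from AlternatingMap.map_eq_zero_of_eq _ _ (show ![bb 0, bb 1, bb 1, bb 2, bb 4, bb 5] 1 = ![bb 0, bb 1, bb 1, bb 2, bb 4, bb 5] 2 from rfl) (by decide)]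
  rw [show ιMulti ℂ 6 ![bb 0, bb 1, bb 0, bb 2, bb 3, bb 5] = 0 from AlternatingMap.map_eq_zero_of_eq _ _ (show ![bb 0, bb 1, bb 0, bb 2, bb 3, bb 5] 0 = ![bb 0, bb 1, bb 0, bb 2, bb 3, bb 5] 2 from rfl) (by decide)]
  rw [show ιMulti ℂ 6 ![bb 0, bb 1, bb 0, bb 1, bb 3, bb 4] = 0 from AlternatingMap.map_eq_zero_of_eq _ _ (show ![bb 0, bb 1, bb 0, bb 1, bb 3, bb 4] 0 = ![bb 0, bb 1, bb 0, bb 1, bb 3, bb 4] 2 from rfl) (by decide)]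
  simp only [add_zero, zero_add]

lemma key3 : e 4 * e 5 * ω = ιMulti ℂ 6 ![bb 0, bb 1, bb 2, bb 4, bb 5, bb 6] := by
  rw [ω, ω₀, mul_add, mul_add, mul_add, mul_add, h6, h6, h6, h6, h6]
  rw [show ιMulti ℂ 6 ![bb 4, bb 5, bb 3, bb 4, bb 5, bb 6] = 0 from AlternatingMap.map_eq_zero_of_eq _ _ (show ![bb 4, bb 5, bb 3, bb 4, bb 5, bb 6] 0 = ![bb 4, bb 5, bb 3, bb 4, bb 5, bb 6] 3 from rfl) (by decide)]
  rw [show ιMulti ℂ 6 ![bb 4, bb 5, bb 1, bb 2, bb 4, bb 5] = 0 from AlternatingMap.map_eq_zero_of_eq _ _ (show ![bb 4, bb 5, bb 1, bb 2, bb 4, bb 5] 0 = ![bb 4, bb 5, bb 1, bb 2, bb 4, bb 5] 4 from rfl) (by decide)]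
  rw [show ιMulti ℂ 6 ![bb 4, bb 5, bb 0, bb 2, bb 3, bb 5] = 0 from AlternatingMap.map_eq_zero_of_eq _ _ (show ![bb 4, bb 5, bb 0, bb 2, bb 3, bb 5] 1 = ![bb 4, bb 5, bb 0, bb 2, bb 3, bb 5] 5 from rfl) (by decide)]
  rw [show ιMulti ℂ 6 ![bb 4, bb 5, bb 0, bb 1, bb 3, bb 4] = 0 from AlternatingMap.map_eq_zero_of_eq _ _ (show ![bb 4, bb 5, bb 0, bb 1, bb 3, bb 4] 0 = ![bb 4, bb 5, bb 0, bb 1, bb 3, bb 4] 5 from rfl) (by decide)]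
  have hp : ![bb 4, bb 5, bb 0, bb 1, bb 2, bb 6] = ![bb 0, bb 1, bb 2, bb 4, bb 5, bb 6] ∘ σ3 := by funext i; fin_cases i <;> rfl
  rw [hp, AlternatingMap.map_perm, show Equiv.Perm.sign σ3 = 1 by decide, one_smul]
  simp only [add_zero, zero_add]

lemma key4 : e 3 * e 5 * ω = ιMulti ℂ 6 ![bb 0, bb 1, bb 2, bb 3, bb 5, bb 6] := by
  rw [ω, ω₀, mul_add, mul_add, mul_add, mul_add, h6, h6, h6, h6, h6]
  rw [show ιMulti ℂ 6 ![bb 3, bb 5, bb 3, bb 4, bb 5, bb 6] = 0 from AlternatingMap.map_eq_zero_of_eq _ _ (show ![bb 3, bb 5, bb 3, bb 4, bb 5, bb 6] 0 = ![bb 3, bb 5, bb 3, bb 4, bb 5, bb 6] 2 from rfl) (by decide)]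
  rw [show ιMulti ℂ 6 ![bb 3, bb 5, bb 1, bb 2, bb 4, bb 5] = 0 from AlternatingMap.map_eq_zero_of_eq _ _ (show ![bb 3, bb 5, bb 1, bb 2, bb 4, bb 5] 1 = ![bb 3, bb 5, bb 1, bb 2, bb 4, bb 5] 5 from rfl) (by decide)]
  rw [show ιMulti ℂ 6 ![bb 3, bb 5, bb 0, bb 2, bb 3, bb 5] = 0 from AlternatingMap.map_eq_zero_of_eq _ _ (show ![bb 3, bb 5, bb 0, bb 2, bb 3, bb 5] 0 = ![bb 3, bb 5, bb 0, bb 2, bb 3, bb 5] 4 from rfl) (by decide)]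
  rw [show ιMulti ℂ 6 ![bb 3, bb 5, bb 0, bb 1, bb 3, bb 4] = 0 from AlternatingMap.map_eq_zero_of_eq _ _ (show ![bb 3, bb 5, bb 0, bb 1, bb 3, bb 4] 0 = ![bb 3, bb 5, bb 0, bb 1, bb 3, bb 4] 4 from rfl) (by decide)]
  have hp : ![bb 3, bb 5, bb 0, bb 1, bb 2, bb 6] = ![bb 0, bb 1, bb 2, bb 3, bb 5, bb 6] ∘ σ3 := by funext i; fin_cases i <;> rfl
  rw [hp, AlternatingMap.map_perm, show Equiv.Perm.sign σ3 = 1 by decide, one_smul]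
  simp only [add_zero, zero_add]

lemma key5 : e 3 * e 4 * ω = ιMulti ℂ 6 ![bb 0, bb 1, bb 2, bb 3, bb 4, bb 6] := by
  rw [ω, ω₀, mul_add, mul_add, mul_add, mul_add, h6, h6, h6, h6, h6]
  rw [show ιMulti ℂ 6 ![bb 3, bb 4, bb 3, bb 4, bb 5, bb 6] = 0 from AlternatingMap.map_eq_zero_of_eq _ _ (show ![bb 3, bb 4, bb 3, bb 4, bb 5, bb 6] 0 = ![bb 3, bb 4, bb 3, bb 4, bb 5, bb 6] 2 from rfl) (by decide)]
  rw [show ιMulti ℂ 6 ![bb 3, bb 4, bb 1, bb 2, bb 4, bb 5] = 0 from AlternatingMap.map_eq_zero_of_eq _ _ (show ![bb 3, bb 4, bb 1, bb 2, bb 4, bb 5] 1 = ![bb 3, bb 4, bb 1, bb 2, bb 4, bb 5] 4 from rfl) (by decide)]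
  rw [show ιMulti ℂ 6 ![bb 3, bb 4, bb 0, bb 2, bb 3, bb 5] = 0 from AlternatingMap.map_eq_zero_of_eq _ _ (show ![bb 3, bb 4, bb 0, bb 2, bb 3, bb 5] 0 = ![bb 3, bb 4, bb 0, bb 2, bb 3, bb 5] 4 from rfl) (by decide)]
  rw [show ιMulti ℂ 6 ![bb 3, bb 4, bb 0, bb 1, bb 3, bb 4] = 0 from AlternatingMap.map_eq_zero_of_eq _ _ (show ![bb 3, bb 4, bb 0, bb 1, bb 3, bb 4] 0 = ![bb 3, bb 4, bb 0, bb 1, bb 3, bb 4] 4 from rfl) (by decide)]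
  have hp : ![bb 3, bb 4, bb 0, bb 1, bb 2, bb 6] = ![bb 0, bb 1, bb 2, bb 3, bb 4, bb 6] ∘ σ3 := by funext i; fin_cases i <;> rfl
  rw [hp, AlternatingMap.map_perm, show Equiv.Perm.sign σ3 = 1 by decide, one_smul]
  simp only [add_zero, zero_add]

lemma key6 : e 0 * e 3 * ω = ιMulti ℂ 6 ![bb 0, bb 1, bb 2, bb 3, bb 4, bb 5] := by
  rw [ω, ω₀, mul_add, mul_add, mul_add, mul_add, h6, h6, h6, h6, h6]
  rw [show ιMulti ℂ 6 ![bb 0, bb 3, bb 0, bb 1, bb 2, bb 6] = 0 from AlternatingMap.map_eq_zero_of_eq _ _ (show ![bb 0, bb 3, bb 0, bb 1, bb 2, bb 6] 0 = ![bb 0, bb 3, bb 0, bb 1, bb 2, bb 6] 2 from rfl) (by decide)]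
  rw [show ιMulti ℂ 6 ![bb 0, bb 3, bb 3, bb 4, bb 5, bb 6] = 0 from AlternatingMap.map_eq_zero_of_eq _ _ (show ![bb 0, bb 3, bb 3, bb 4, bb 5, bb 6] 1 = ![bb 0, bb 3, bb 3, bb 4, bb 5, bb 6] 2 from rfl) (by decide)]
  rw [show ιMulti ℂ 6 ![bb 0, bb 3, bb 0, bb 2, bb 3, bb 5] = 0 from AlternatingMap.map_eq_zero_of_eq _ _ (show ![bb 0, bb 3, bb 0, bb 2, bb 3, bb 5] 0 = ![bb 0, bb 3, bb 0, bb 2, bb 3, bb 5] 2 from rfl) (by decide)]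
  rw [show ιMulti ℂ 6 ![bb 0, bb 3, bb 0, bb 1, bb 3, bb 4] = 0 from AlternatingMap.map_eq_zero_of_eq _ _ (show ![bb 0, bb 3, bb 0, bb 1, bb 3, bb 4] 0 = ![bb 0, bb 3, bb 0, bb 1, bb 3, bb 4] 2 from rfl) (by decide)]
  have hp : ![bb 0, bb 3, bb 1, bb 2, bb 4, bb 5] = ![bb 0, bb 1, bb 2, bb 3, bb 4, bb 5] ∘ σ6 := by funext i; fin_cases i <;> rfl
  rw [hp, AlternatingMap.map_perm, show Equiv.Perm.sign σ6 = 1 by decide, one_smul]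
  simp only [add_zero, zero_add]


/-! ### Dual functionals and generic independence/spanning machinery -/

def dd {n : ℕ} (s : Fin n → Fin 7) : (Fin 7 → ℂ) [⋀^Fin n]→ₗ[ℂ] ℂ :=
  Matrix.detRowAlternating.compLinearMap (LinearMap.funLeft ℂ ℂ s)

def φ {n : ℕ} (s : Fin n → Fin 7) : ExteriorAlgebra ℂ (Fin 7 → ℂ) →ₗ[ℂ] ℂ :=
  liftAlternating (Pi.single n (dd s))

lemma φ_eval {n : ℕ} (s : Fin n → Fin 7) (u : Fin n → Fin 7 → ℂ) :
    φ s (ιMulti ℂ n u) = Matrix.det (Matrix.of fun i j => u i (s j)) := by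
  rw [φ, liftAlternating_apply_ιMulti, Pi.single_eq_same]
  rfl

lemma pair_self {n : ℕ} (s : Fin n → Fin 7) (hs : Function.Injective s) :
    φ s (ιMulti ℂ n (fun i => bb (s i))) = 1 := by
  rw [φ_eval]
  have h : (Matrix.of fun i j => (bb (s i)) (s j)) = (1 : Matrix (Fin n) (Fin n) ℂ) := by
    ext i j
    by_cases h : i = j
    · subst h; simp [Matrix.one_apply, Pi.single_apply]
    · simp [Matrix.one_apply, h, Pi.single_apply, (hs.ne (Ne.symm h) : s j ≠ s i)]
  rw [h, Matrix.det_one]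

lemma pair_zero {n : ℕ} (s t : Fin n → Fin 7) (i : Fin n) (h : ∀ j, s j ≠ t i) :
    φ s (ιMulti ℂ n (fun i => bb (t i))) = 0 := by
  rw [φ_eval]
  exact Matrix.det_eq_zero_of_row_eq_zero i (fun j => by simp [Pi.single_apply, h j])

lemma indep_gen {n N : ℕ} (f : Fin N → Fin n → Fin 7) (hinj : ∀ k, Function.Injective (f k))
    (hor : ∀ k l, l ≠ k → ∃ i, ∀ j, f k j ≠ f l i) :
    LinearIndependent ℂ (fun k => ιMulti ℂ n (fun i => bb (f k i))) := by
  rw [Fintype.linearIndependent_iff]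
  intro g hg k
  have h := congrArg (φ (f k)) hg
  have he : ∀ l, φ (f k) (ιMulti ℂ n (fun i => bb (f l i))) = if l = k then 1 else 0 := by
    intro l
    rcases eq_or_ne l k with rfl | hne
    · simp [pair_self _ (hinj l)]
    · obtain ⟨i, hi⟩ := hor k l hne
      simp [hne, pair_zero _ _ i hi]
  simp only [map_sum, map_smul, he, map_zero, smul_eq_mul, mul_ite, mul_one, mul_zero,
    Finset.sum_ite_eq', Finset.mem_univ, if_true] at h
  exact h

lemma sort_gen {n N : ℕ} (f : Fin N → Fin n → Fin 7)
    (v : Fin n → Fin 7) (hv : Function.Injective v)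
    (himg : ∃ k, Finset.univ.image (f k) = Finset.univ.image v) :
    ∃ (k : Fin N) (σ : Equiv.Perm (Fin n)), v = f k ∘ σ := by
  obtain ⟨k, hk⟩ := himg
  have hmem : ∀ i, v i ∈ Finset.univ.image (f k) := by
    intro i; rw [hk]; exact Finset.mem_image_of_mem v (Finset.mem_univ i)
  choose σf hσ using fun i => Finset.mem_image.mp (hmem i)
  have hσf : Function.Injective σf := by
    intro a b hab
    exact hv (((hσ a).2.symm.trans (by rw [hab])).trans (hσ b).2)
  have hb : Function.Bijective σf := Finite.injective_iff_bijective.mp hσf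
  exact ⟨k, Equiv.ofBijective σf hb, funext fun i => ((hσ i).2).symm⟩

lemma span_gen {n N : ℕ} (f : Fin N → Fin n → Fin 7)
    (himg : ∀ v : Fin n → Fin 7, Function.Injective v →
      ∃ k, Finset.univ.image (f k) = Finset.univ.image v) :
    ⋀[ℂ]^n (Fin 7 → ℂ)
      = Submodule.span ℂ (Set.range fun k => ιMulti ℂ n (fun i => bb (f k i))) := by
  set T := Submodule.span ℂ (Set.range fun k => ιMulti ℂ n (fun i => bb (f k i))) with hT
  refine le_antisymm ?_ ?_
  · rw [← ιMulti_span_fixedDegree]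
    refine Submodule.span_le.mpr ?_
    rintro _ ⟨v, rfl⟩
    have hzero : (T.mkQ).compAlternatingMap (ιMulti ℂ n) = 0 := by
      refine Module.Basis.ext_alternating (Pi.basisFun ℂ (Fin 7)) (fun w hw => ?_)
      have hbb : (fun i => (Pi.basisFun ℂ (Fin 7)) (w i)) = fun i => bb (w i) := by
        funext i
        simp [Pi.basisFun_apply, Pi.single]
      obtain ⟨k, σ, hkσ⟩ := sort_gen f w hw (himg w hw)
      have hcomp : (fun i => bb (w i)) = (fun i => bb (f k i)) ∘ σ := by
        funext i; rw [hkσ]; rfl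
      rw [hbb, hcomp, AlternatingMap.map_perm]
      have hmem : ιMulti ℂ n (fun i => bb (f k i)) ∈ T := Submodule.subset_span ⟨k, rfl⟩
      have hz : (T.mkQ.compAlternatingMap (ιMulti ℂ n)) (fun i => bb (f k i)) = 0 := by
        show T.mkQ _ = 0
        rw [Submodule.mkQ_apply]
        exact (Submodule.Quotient.mk_eq_zero T).mpr hmem
      rw [hz, smul_zero, AlternatingMap.zero_apply]
    have hv0 : T.mkQ (ιMulti ℂ n v) = 0 := DFunLike.congr_fun hzero v
    rw [Submodule.mkQ_apply] at hv0
    exact (Submodule.Quotient.mk_eq_zero T).mp hv0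
  · refine Submodule.span_le.mpr ?_
    rintro _ ⟨k, rfl⟩
    exact ιMulti_range ℂ n ⟨_, rfl⟩

/-! ### The concrete index families -/

def u2 : Fin 21 → Fin 2 → Fin 7 := ![![0, 1], ![0, 2], ![0, 3], ![0, 4], ![0, 5], ![0, 6], ![1, 2], ![1, 3], ![1, 4], ![1, 5], ![1, 6], ![2, 3], ![2, 4], ![2, 5], ![2, 6], ![3, 4], ![3, 5], ![3, 6], ![4, 5], ![4, 6], ![5, 6]]

def ss : Fin 7 → Fin 6 → Fin 7 := ![![1, 2, 3, 4, 5, 6], ![0, 2, 3, 4, 5, 6], ![0, 1, 3, 4, 5, 6], ![0, 1, 2, 4, 5, 6], ![0, 1, 2, 3, 5, 6], ![0, 1, 2, 3, 4, 6], ![0, 1, 2, 3, 4, 5]]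

lemma hinj2 : ∀ k, Function.Injective (u2 k) := by decide
lemma hor2 : ∀ k l, l ≠ k → ∃ i, ∀ j, u2 k j ≠ u2 l i := by decide
lemma himg2 : ∀ v : Fin 2 → Fin 7, Function.Injective v →
    ∃ k, Finset.univ.image (u2 k) = Finset.univ.image v := by decide

lemma hinj6 : ∀ k, Function.Injective (ss k) := by decide
lemma hor6 : ∀ k l, l ≠ k → ∃ i, ∀ j, ss k j ≠ ss l i := by decide
lemma himg6 : ∀ v : Fin 6 → Fin 7, Function.Injective v →
    ∃ k, Finset.univ.image (ss k) = Finset.univ.image v := by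
  intro v hv
  have hcard : (Finset.univ.image v)ᶜ.card = 1 := by
    rw [Finset.card_compl, Finset.card_image_of_injective _ hv]
    rfl
  obtain ⟨k, hk⟩ := Finset.card_eq_one.mp hcard
  have h2 : Finset.univ.image v = ({k} : Finset (Fin 7))ᶜ := by
    rw [← hk, compl_compl]
  have h3 : ∀ k : Fin 7, Finset.univ.image (ss k) = ({k} : Finset (Fin 7))ᶜ := by decide
  exact ⟨k, by rw [h3, h2]⟩

lemma span2 : ⋀[ℂ]^2 (Fin 7 → ℂ)
    = Submodule.span ℂ (Set.range fun k => ιMulti ℂ 2 (fun i => bb (u2 k i))) :=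
  span_gen u2 himg2

lemma span6 : ⋀[ℂ]^6 (Fin 7 → ℂ)
    = Submodule.span ℂ (Set.range fun k => ιMulti ℂ 6 (fun i => bb (ss k i))) :=
  span_gen ss himg6

lemma finrank2 : Module.finrank ℂ (⋀[ℂ]^2 (Fin 7 → ℂ)) = 21 := by
  rw [span2, finrank_span_eq_card (indep_gen u2 hinj2 hor2)]
  simp

lemma finrank6 : Module.finrank ℂ (⋀[ℂ]^6 (Fin 7 → ℂ)) = 7 := by
  rw [span6, finrank_span_eq_card (indep_gen ss hinj6 hor6)]
  simp

/-! ### Membership lemmas -/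

lemma mem1 (i : Fin 7) : e i ∈ ⋀[ℂ]^1 (Fin 7 → ℂ) := by
  show e i ∈ LinearMap.range (ι ℂ : (Fin 7 → ℂ) →ₗ[ℂ] _) ^ 1
  rw [pow_one]
  exact ⟨_, rfl⟩

lemma mem2 (i j : Fin 7) : e i * e j ∈ ⋀[ℂ]^2 (Fin 7 → ℂ) :=
  SetLike.mul_mem_graded (mem1 i) (mem1 j)

lemma mem4 (a b c d : Fin 7) : e a * e b * e c * e d ∈ ⋀[ℂ]^4 (Fin 7 → ℂ) :=
  SetLike.mul_mem_graded (SetLike.mul_mem_graded (mem2 a b) (mem1 c)) (mem1 d)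

lemma hω : ω ∈ ⋀[ℂ]^4 (Fin 7 → ℂ) := by
  rw [ω, ω₀]
  exact add_mem (add_mem (add_mem (add_mem (mem4 _ _ _ _) (mem4 _ _ _ _)) (mem4 _ _ _ _))
    (mem4 _ _ _ _)) (mem4 _ _ _ _)

abbrev F0 : ⋀[ℂ]^2 (Fin 7 → ℂ) →ₗ[ℂ] ExteriorAlgebra ℂ (Fin 7 → ℂ) :=
  (LinearMap.mulRight ℂ ω).comp (⋀[ℂ]^2 (Fin 7 → ℂ)).subtype

lemma r0 : ιMulti ℂ 6 (fun i => bb (ss 0 i)) ∈ LinearMap.range F0 := by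
  refine ⟨⟨e 1 * e 2, mem2 1 2⟩, ?_⟩
  show e 1 * e 2 * ω = _
  rw [show (fun i => bb (ss 0 i)) = ![bb 1, bb 2, bb 3, bb 4, bb 5, bb 6] from funext fun i => by fin_cases i <;> rfl]
  exact key0

lemma r1 : ιMulti ℂ 6 (fun i => bb (ss 1 i)) ∈ LinearMap.range F0 := by
  refine ⟨⟨e 0 * e 2, mem2 0 2⟩, ?_⟩
  show e 0 * e 2 * ω = _
  rw [show (fun i => bb (ss 1 i)) = ![bb 0, bb 2, bb 3, bb 4, bb 5, bb 6] from funext fun i => by fin_cases i <;> rfl]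
  exact key1

lemma r2 : ιMulti ℂ 6 (fun i => bb (ss 2 i)) ∈ LinearMap.range F0 := by
  refine ⟨⟨e 0 * e 1, mem2 0 1⟩, ?_⟩
  show e 0 * e 1 * ω = _
  rw [show (fun i => bb (ss 2 i)) = ![bb 0, bb 1, bb 3, bb 4, bb 5, bb 6] from funext fun i => by fin_cases i <;> rfl]
  exact key2

lemma r3 : ιMulti ℂ 6 (fun i => bb (ss 3 i)) ∈ LinearMap.range F0 := by
  refine ⟨⟨e 4 * e 5, mem2 4 5⟩, ?_⟩
  show e 4 * e 5 * ω = _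
  rw [show (fun i => bb (ss 3 i)) = ![bb 0, bb 1, bb 2, bb 4, bb 5, bb 6] from funext fun i => by fin_cases i <;> rfl]
  exact key3

lemma r4 : ιMulti ℂ 6 (fun i => bb (ss 4 i)) ∈ LinearMap.range F0 := by
  refine ⟨⟨e 3 * e 5, mem2 3 5⟩, ?_⟩
  show e 3 * e 5 * ω = _
  rw [show (fun i => bb (ss 4 i)) = ![bb 0, bb 1, bb 2, bb 3, bb 5, bb 6] from funext fun i => by fin_cases i <;> rfl]
  exact key4

lemma r5 : ιMulti ℂ 6 (fun i => bb (ss 5 i)) ∈ LinearMap.range F0 := by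
  refine ⟨⟨e 3 * e 4, mem2 3 4⟩, ?_⟩
  show e 3 * e 4 * ω = _
  rw [show (fun i => bb (ss 5 i)) = ![bb 0, bb 1, bb 2, bb 3, bb 4, bb 6] from funext fun i => by fin_cases i <;> rfl]
  exact key5

lemma r6 : ιMulti ℂ 6 (fun i => bb (ss 6 i)) ∈ LinearMap.range F0 := by
  refine ⟨⟨e 0 * e 3, mem2 0 3⟩, ?_⟩
  show e 0 * e 3 * ω = _
  rw [show (fun i => bb (ss 6 i)) = ![bb 0, bb 1, bb 2, bb 3, bb 4, bb 5] from funext fun i => by fin_cases i <;> rfl]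
  exact key6

lemma hrange : LinearMap.range F0 = ⋀[ℂ]^6 (Fin 7 → ℂ) := by
  refine le_antisymm ?_ ?_
  · rintro y ⟨⟨x, hx⟩, rfl⟩
    show x * ω ∈ _
    exact SetLike.mul_mem_graded hx hω
  · rw [span6]
    refine Submodule.span_le.mpr ?_
    rintro _ ⟨k, rfl⟩
    fin_cases k
    exacts [r0, r1, r2, r3, r4, r5, r6]

instance : FiniteDimensional ℂ (⋀[ℂ]^2 (Fin 7 → ℂ)) := by
  rw [span2]
  exact FiniteDimensional.span_of_finite ℂ (Set.finite_range _)

/-- The linear map `⋀²ℂ⁷ → ⋀⁶ℂ⁷`, `w ↦ w∧ω`, is surjective onto `⋀⁶ℂ⁷` and its kernel has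
dimension 14: `G₂` is cut out of `G(2,7)` by seven hyperplanes and spans a `ℙ¹³`. -/
theorem stmt_10 :
    LinearMap.range ((LinearMap.mulRight ℂ ω).comp (⋀[ℂ]^2 (Fin 7 → ℂ)).subtype)
      = ⋀[ℂ]^6 (Fin 7 → ℂ) ∧
    Module.finrank ℂ
      (LinearMap.ker ((LinearMap.mulRight ℂ ω).comp (⋀[ℂ]^2 (Fin 7 → ℂ)).subtype)) = 14 := by
  have hrn := LinearMap.finrank_range_add_finrank_ker
    ((LinearMap.mulRight ℂ ω).comp (⋀[ℂ]^2 (Fin 7 → ℂ)).subtype)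
  rw [show LinearMap.range ((LinearMap.mulRight ℂ ω).comp (⋀[ℂ]^2 (Fin 7 → ℂ)).subtype)
      = ⋀[ℂ]^6 (Fin 7 → ℂ) from hrange, finrank6, finrank2] at hrn
  exact ⟨hrange, by omega⟩

end
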